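/- For the set X = ℤ^d ∪ ((1/2,…,1/2) + ℤ^d) with d ≥ 5 and any x ∈ X, the set M_x of 1-reachable points (a translate of ℤ^d) is full-dimensional, i.e., its affine hull is all of ℝ^d, yet M_x ≠ X. -/

import Mathlib

/-- `y` is `t`-reachable from `x` within `X`. -/
def Reachable (d : ℕ) (X : Set (EuclideanSpace ℝ (Fin d))) (t : ℝ)
    (x y : EuclideanSpace ℝ (Fin d)) : Prop :=
  ∃ (m : ℕ) (c : ℕ → EuclideanSpace ℝ (Fin d)),
    c 0 = x ∧ c m = y ∧ (∀ i ≤ m, c i ∈ X) ∧ ∀ i < m, dist (c (i + 1)) (c i) ≤ t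

/-- The integer lattice `ℤ^d` inside `ℝ^d`. -/
def IntLattice (d : ℕ) : Set (EuclideanSpace ℝ (Fin d)) :=
  {v | ∀ i, ∃ n : ℤ, v i = n}

/-- The vector `(1/2, …, 1/2) ∈ ℝ^d`. -/
noncomputable def halfVec (d : ℕ) : EuclideanSpace ℝ (Fin d) := WithLp.toLp 2 (fun _ => 1 / 2)

/-- The set `X = ℤ^d ∪ ((1/2, …, 1/2) + ℤ^d)` in `ℝ^d`. -/
def halfIntSet (d : ℕ) : Set (EuclideanSpace ℝ (Fin d)) :=
  IntLattice d ∪ {v | ∃ w ∈ IntLattice d, v = halfVec d + w}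

lemma intLattice_sub {d : ℕ} {a b : EuclideanSpace ℝ (Fin d)}
    (ha : a ∈ IntLattice d) (hb : b ∈ IntLattice d) : a - b ∈ IntLattice d := by
  intro i
  obtain ⟨n, hn⟩ := ha i
  obtain ⟨m, hm⟩ := hb i
  exact ⟨n - m, by simp [hn, hm]⟩

lemma intLattice_add {d : ℕ} {a b : EuclideanSpace ℝ (Fin d)}
    (ha : a ∈ IntLattice d) (hb : b ∈ IntLattice d) : a + b ∈ IntLattice d := by
  intro i
  obtain ⟨n, hn⟩ := ha i
  obtain ⟨m, hm⟩ := hb i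
  exact ⟨n + m, by simp [hn, hm]⟩

lemma halfk_sq {k : ℤ} : (1:ℝ)/4 ≤ ((k:ℝ) + 1/2)^2 := by
  have h1 : (2*k+1:ℤ) ≠ 0 := by omega
  have h2 : (1:ℤ) ≤ |2*k+1| := Int.one_le_abs h1
  have h3 : (1:ℤ) ≤ (2*k+1)^2 := by nlinarith [sq_abs (2*k+1)]
  have h4 : (1:ℝ) ≤ ((2*k+1:ℤ):ℝ)^2 := by exact_mod_cast h3
  push_cast at h4
  nlinarith

lemma mixed_far {d : ℕ} (hd : 5 ≤ d) {y z : EuclideanSpace ℝ (Fin d)}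
    (h : ∀ i, ∃ k : ℤ, z i - y i = (k:ℝ) + 1/2) : ¬ dist z y ≤ 1 := by
  intro hle
  have hsq : dist z y ^ 2 = ∑ i, (z i - y i)^2 := by
    rw [EuclideanSpace.dist_eq]
    rw [Real.sq_sqrt (by positivity)]
    simp [Real.dist_eq, sq_abs]
  have hterm : ∀ i ∈ Finset.univ, (1:ℝ)/4 ≤ (z i - y i)^2 := by
    intro i _
    obtain ⟨k, hk⟩ := h i
    rw [hk]; exact halfk_sq
  have hsum : (d:ℝ) * (1/4) ≤ ∑ i, (z i - y i)^2 := by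
    calc (d:ℝ) * (1/4) = ∑ _i : Fin d, (1:ℝ)/4 := by simp [mul_comm]
    _ ≤ _ := Finset.sum_le_sum hterm
  have hd' : (5:ℝ) ≤ d := by exact_mod_cast hd
  have h1 : dist z y ^ 2 ≤ 1 := by nlinarith [dist_nonneg (x := z) (y := y)]
  nlinarith

lemma step_same_coset {d : ℕ} (hd : 5 ≤ d) {y z : EuclideanSpace ℝ (Fin d)}
    (hy : y ∈ halfIntSet d) (hz : z ∈ halfIntSet d) (h : dist z y ≤ 1) :
    z - y ∈ IntLattice d := by
  rcases hy with hy | ⟨w, hw, rfl⟩ <;> rcases hz with hz | ⟨w', hw', rfl⟩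
  · exact intLattice_sub hz hy
  · exfalso
    refine mixed_far hd (fun i => ?_) h
    obtain ⟨n, hn⟩ := hw' i
    obtain ⟨m, hm⟩ := hy i
    refine ⟨n - m, ?_⟩
    have : (halfVec d + w') i = 1/2 + w' i := rfl
    rw [this, hn, hm]; push_cast; ring
  · exfalso
    refine mixed_far hd (fun i => ?_) h
    obtain ⟨n, hn⟩ := hz i
    obtain ⟨m, hm⟩ := hw i
    refine ⟨n - m - 1, ?_⟩
    have : (halfVec d + w) i = 1/2 + w i := rfl
    rw [this, hn, hm]; push_cast; ring
  · have : halfVec d + w' - (halfVec d + w) = w' - w := by abel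
    rw [this]
    exact intLattice_sub hw' hw

lemma reachable_coset {d : ℕ} (hd : 5 ≤ d) {x y : EuclideanSpace ℝ (Fin d)}
    (h : Reachable d (halfIntSet d) 1 x y) : y - x ∈ IntLattice d := by
  obtain ⟨m, c, h0, hm, hmem, hstep⟩ := h
  have key : ∀ i ≤ m, c i - x ∈ IntLattice d := by
    intro i hi
    induction i with
    | zero => rw [h0, sub_self]; exact fun j => ⟨0, by simp⟩
    | succ n ih =>
      have h1 : c (n+1) - c n ∈ IntLattice d :=
        step_same_coset hd (hmem n (by omega)) (hmem (n+1) hi) (hstep n (by omega))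
      have h2 := ih (by omega)
      have : c (n+1) - x = (c (n+1) - c n) + (c n - x) := by abel
      rw [this]
      exact intLattice_add h1 h2
  rw [← hm]
  exact key m le_rfl

lemma halfIntSet_add_int {d : ℕ} {a v : EuclideanSpace ℝ (Fin d)}
    (ha : a ∈ halfIntSet d) (hv : v ∈ IntLattice d) : a + v ∈ halfIntSet d := by
  rcases ha with ha | ⟨w, hw, rfl⟩
  · exact Or.inl (intLattice_add ha hv)
  · exact Or.inr ⟨w + v, intLattice_add hw hv, by abel⟩

lemma single_int {d : ℕ} (i : Fin d) :
    (EuclideanSpace.single i (1:ℝ)) ∈ IntLattice d := by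
  intro j
  refine ⟨if j = i then 1 else 0, ?_⟩
  rw [EuclideanSpace.single_apply]
  split_ifs <;> simp

/-- For `X = ℤ^d ∪ ((1/2,…,1/2) + ℤ^d)` with `d ≥ 5` and any `x ∈ X`, the set `M_x`
of `1`-reachable points from `x` (a translate of `ℤ^d`) is full-dimensional — its
affine hull is all of `ℝ^d` — yet `M_x ≠ X`. -/
theorem halfInt_lattice_reachable_full_dimensional_ne (d : ℕ) (hd : 5 ≤ d)
    (x : EuclideanSpace ℝ (Fin d)) (hx : x ∈ halfIntSet d) :
    affineSpan ℝ {y | Reachable d (halfIntSet d) 1 x y} = ⊤ ∧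
      {y | Reachable d (halfIntSet d) 1 x y} ≠ halfIntSet d := by
  set S := {y | Reachable d (halfIntSet d) 1 x y} with hS
  have hxS : x ∈ S := ⟨0, fun _ => x, rfl, rfl, fun i _ => hx, fun i hi => by omega⟩
  have hstepS : ∀ i : Fin d, x + EuclideanSpace.single i (1:ℝ) ∈ S := by
    intro i
    refine ⟨1, fun j => if j = 0 then x else x + EuclideanSpace.single i 1, by simp, by simp, ?_, ?_⟩
    · intro j hj
      interval_cases j
      · simpa using hx
      · simpa using halfIntSet_add_int hx (single_int i)
    · intro j hj
      interval_cases j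
      norm_num [dist_self_add_left, EuclideanSpace.norm_single]
  constructor
  · rw [AffineSubspace.affineSpan_eq_top_iff_vectorSpan_eq_top_of_nonempty ℝ (EuclideanSpace ℝ (Fin d)) (EuclideanSpace ℝ (Fin d)) ⟨x, hxS⟩]
    rw [eq_top_iff, ← (EuclideanSpace.basisFun (Fin d) ℝ).toBasis.span_eq]
    rw [Submodule.span_le]
    rintro _ ⟨i, rfl⟩
    have : (EuclideanSpace.basisFun (Fin d) ℝ).toBasis i = EuclideanSpace.single i 1 := by
      simp [EuclideanSpace.basisFun_apply]
    rw [this]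
    have := vsub_mem_vectorSpan ℝ (hstepS i) hxS
    simpa using this
  · intro hEq
    have hmem : x + halfVec d ∈ halfIntSet d := by
      rcases hx with hx' | ⟨w, hw, rfl⟩
      · exact Or.inr ⟨x, hx', by abel⟩
      · refine Or.inl ?_
        intro i
        obtain ⟨n, hn⟩ := hw i
        refine ⟨n + 1, ?_⟩
        have h1 : (halfVec d + w + halfVec d) i = 1/2 + w i + 1/2 := rfl
        rw [h1, hn]; push_cast; ring
    rw [← hEq] at hmem
    have := reachable_coset hd hmem
    have h0 := this ⟨0, by omega⟩
    obtain ⟨n, hn⟩ := h0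
    have h1 : (x + halfVec d - x) (⟨0, by omega⟩ : Fin d) = 1/2 := by
      have : x + halfVec d - x = halfVec d := by abel
      rw [this]; rfl
    rw [h1] at hn
    have : (2*n:ℤ) = 1 := by
      have : (2*n:ℝ) = 1 := by rw [← hn] at *; linarith [hn]
      exact_mod_cast this
    omega
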